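/- For all m, M, a > 0, there exists a unique L₁ ∈ (0, a/2) satisfying M·L₁/a^3 − m/(4L₁^2) − M/(2(L₁+a/2)^2) + M/(2(a/2−L₁)^2) = 0. -/

import Mathlib

open Filter Set Topology

theorem stmt2 (m M a : ℝ) (hm : 0 < m) (hM : 0 < M) (ha : 0 < a) :
    ∃! L₁ : ℝ, L₁ ∈ Set.Ioo (0:ℝ) (a/2) ∧
      M*L₁/a^3 - m/(4*L₁^2) - M/(2*(L₁+a/2)^2) + M/(2*(a/2-L₁)^2) = 0 := by
  have ha2 : 0 < a/2 := by linarith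
  set f : ℝ → ℝ := fun x => M*x/a^3 - m/(4*x^2) - M/(2*(x+a/2)^2) + M/(2*(a/2-x)^2)
    with hf
  -- strict monotonicity on Ioo 0 (a/2)
  have hmono : StrictMonoOn f (Set.Ioo 0 (a/2)) := by
    intro x hx y hy hxy
    obtain ⟨hx0, hx2⟩ := hx
    obtain ⟨hy0, hy2⟩ := hy
    have h1 : M*x/a^3 < M*y/a^3 := by gcongr
    have h2 : m/(4*y^2) < m/(4*x^2) := by
      apply div_lt_div_of_pos_left hm (by positivity)
      have : x^2 < y^2 := by nlinarith
      linarith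
    have h3 : M/(2*(y+a/2)^2) < M/(2*(x+a/2)^2) := by
      apply div_lt_div_of_pos_left hM (by positivity)
      have : (x+a/2)^2 < (y+a/2)^2 := by nlinarith
      linarith
    have h4 : M/(2*(a/2-x)^2) < M/(2*(a/2-y)^2) := by
      have hay : 0 < a/2 - y := by linarith
      apply div_lt_div_of_pos_left hM (by positivity)
      have : (a/2-y)^2 < (a/2-x)^2 := by nlinarith
      linarith
    simp only [hf]
    linarith
  -- auxiliary "nice part" g, continuous near 0 and near a/2
  -- tendsto atBot at 0⁺
  have hneg : ∃ p ∈ Set.Ioo (0:ℝ) (a/2), f p < 0 := by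
    have hg : Tendsto (fun x : ℝ => M*x/a^3 - M/(2*(x+a/2)^2) + M/(2*(a/2-x)^2))
        (𝓝[>] (0:ℝ)) (𝓝 (M*0/a^3 - M/(2*(0+a/2)^2) + M/(2*(a/2-0)^2))) := by
      apply Tendsto.mono_left _ nhdsWithin_le_nhds
      apply ContinuousAt.tendsto
      have h1 : (2*((0:ℝ)+a/2)^2) ≠ 0 := by positivity
      have h2 : (2*(a/2-(0:ℝ))^2) ≠ 0 := by
        simp only [sub_zero]; positivity
      fun_prop (disch := first | exact h1 | exact h2 | positivity)
    have hsq : Tendsto (fun x : ℝ => x^2) (𝓝[>] (0:ℝ)) (𝓝[>] (0:ℝ)) := by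
      apply tendsto_nhdsWithin_of_tendsto_nhds_of_eventually_within
      · have := (continuous_pow 2 (M := ℝ)).tendsto 0
        simpa using this.mono_left nhdsWithin_le_nhds
      · filter_upwards [self_mem_nhdsWithin] with x hx
        exact pow_pos (show (0:ℝ) < x from hx) 2
    have hinv : Tendsto (fun x : ℝ => (m/4) / x^2) (𝓝[>] (0:ℝ)) atTop := by
      have := (tendsto_inv_nhdsGT_zero).comp hsq
      have h2 := this.const_mul_atTop (show (0:ℝ) < m/4 by linarith)
      refine h2.congr fun x => ?_
      simp [Function.comp, div_eq_mul_inv]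
    have hfb : Tendsto f (𝓝[>] (0:ℝ)) atBot := by
      have : Tendsto (fun x => (M*x/a^3 - M/(2*(x+a/2)^2) + M/(2*(a/2-x)^2)) -
          (m/4)/x^2) (𝓝[>] (0:ℝ)) atBot := by
        exact hg.add_atBot (tendsto_neg_atTop_atBot.comp hinv)
      refine this.congr fun x => ?_
      simp only [hf, div_div]
      ring
    have h1 : ∀ᶠ x in 𝓝[>] (0:ℝ), f x < 0 := hfb.eventually (eventually_lt_atBot 0)
    have h2 : ∀ᶠ x in 𝓝[>] (0:ℝ), x ∈ Set.Ioo (0:ℝ) (a/2) :=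
      Ioo_mem_nhdsGT_of_mem (by constructor <;> [rfl; exact ha2])
    obtain ⟨p, hp1, hp2⟩ := (h2.and h1).exists
    exact ⟨p, hp1, hp2⟩
  -- tendsto atTop at (a/2)⁻
  have hpos : ∃ q ∈ Set.Ioo (0:ℝ) (a/2), 0 < f q := by
    have hg : Tendsto (fun x : ℝ => M*x/a^3 - m/(4*x^2) - M/(2*(x+a/2)^2))
        (𝓝[<] (a/2)) (𝓝 (M*(a/2)/a^3 - m/(4*(a/2)^2) - M/(2*(a/2+a/2)^2))) := by
      apply Tendsto.mono_left _ nhdsWithin_le_nhds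
      apply ContinuousAt.tendsto
      have h1 : (4*((a:ℝ)/2)^2) ≠ 0 := by positivity
      have h2 : (2*((a:ℝ)/2+a/2)^2) ≠ 0 := by positivity
      fun_prop (disch := first | exact h1 | exact h2 | positivity)
    have hsq : Tendsto (fun x : ℝ => (a/2-x)^2) (𝓝[<] (a/2)) (𝓝[>] (0:ℝ)) := by
      apply tendsto_nhdsWithin_of_tendsto_nhds_of_eventually_within
      · have : ContinuousAt (fun x : ℝ => (a/2-x)^2) (a/2) := by fun_prop
        have := this.tendsto
        simpa using this.mono_left nhdsWithin_le_nhds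
      · filter_upwards [self_mem_nhdsWithin] with x hx
        have : 0 < a/2 - x := by have : x < a/2 := hx; linarith
        exact Set.mem_Ioi.mpr (by positivity)
    have hinv : Tendsto (fun x : ℝ => (M/2) / (a/2-x)^2) (𝓝[<] (a/2)) atTop := by
      have := (tendsto_inv_nhdsGT_zero).comp hsq
      have h2 := this.const_mul_atTop (show (0:ℝ) < M/2 by linarith)
      refine h2.congr fun x => ?_
      simp [Function.comp, div_eq_mul_inv]
    have hft : Tendsto f (𝓝[<] (a/2)) atTop := by
      have : Tendsto (fun x => (M*x/a^3 - m/(4*x^2) - M/(2*(x+a/2)^2)) +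
          (M/2)/(a/2-x)^2) (𝓝[<] (a/2)) atTop := hg.add_atTop hinv
      refine this.congr fun x => ?_
      simp only [hf, div_div]
    have h1 : ∀ᶠ x in 𝓝[<] (a/2), 0 < f x := hft.eventually (eventually_gt_atTop 0)
    have h2 : ∀ᶠ x in 𝓝[<] (a/2), x ∈ Set.Ioo (0:ℝ) (a/2) :=
      Ioo_mem_nhdsLT_of_mem (by constructor <;> [exact ha2; rfl])
    obtain ⟨q, hq1, hq2⟩ := (h2.and h1).exists
    exact ⟨q, hq1, hq2⟩
  obtain ⟨p, hp, hfp⟩ := hneg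
  obtain ⟨q, hq, hfq⟩ := hpos
  have hpq : p < q := by
    by_contra h
    push_neg at h
    rcases eq_or_lt_of_le h with h | h
    · rw [h] at hfq; linarith
    · have := hmono hq hp h
      linarith
  have hcont : ContinuousOn f (Set.Icc p q) := by
    intro x hx
    have hx0 : 0 < x := lt_of_lt_of_le hp.1 hx.1
    have hx2 : x < a/2 := lt_of_le_of_lt hx.2 hq.2
    apply ContinuousAt.continuousWithinAt
    have h1 : (4*x^2) ≠ 0 := by positivity
    have h2 : (2*(x+a/2)^2) ≠ 0 := by positivity
    have h3 : (2*(a/2-x)^2) ≠ 0 := by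
      have : 0 < a/2 - x := by linarith
      positivity
    fun_prop (disch := first | exact h1 | exact h2 | exact h3 | positivity)
  have hiv := intermediate_value_Icc (le_of_lt hpq) hcont
  have h0mem : (0:ℝ) ∈ Set.Icc (f p) (f q) := ⟨le_of_lt hfp, le_of_lt hfq⟩
  obtain ⟨c, hc, hfc⟩ := hiv h0mem
  have hcmem : c ∈ Set.Ioo (0:ℝ) (a/2) :=
    ⟨lt_of_lt_of_le hp.1 hc.1, lt_of_le_of_lt hc.2 hq.2⟩
  refine ⟨c, ⟨hcmem, hfc⟩, ?_⟩
  rintro y ⟨hy, hfy⟩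
  have : f y = f c := by rw [hfc]; exact hfy
  exact hmono.injOn hy hcmem this
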